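/- Let R > 1 and let f be holomorphic on {z ∈ ℂ : |z| > R} with f(z) − z bounded there, and suppose there are complex numbers (α_{mn})_{m,n≥1} such that for all z, ζ with |z| > R, |ζ| > R and z ≠ ζ, the double series ∑_{m,n≥1} α_{mn} z^{−m} ζ^{−n} converges absolutely and (f(z) − f(ζ))/(z − ζ) = exp(−∑_{m,n≥1} α_{mn} z^{−m} ζ^{−n}). If for every x = (x_n) ∈ ℓ² with ∑_{n≥1}|x_n|² = 1 the series ∑_{m,n≥1} √(mn) α_{mn} x_m x_n converges with |∑_{m,n≥1} √(mn) α_{mn} x_m x_n| ≤ 1, then f extends to a univalent function on 𝔻*: there exists F holomorphic and injective on 𝔻* = {z ∈ ℂ : |z| > 1} with F(z) = f(z) for all |z| > R. -/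

import Mathlib

open Complex Set

noncomputable section

/-- The exterior disk `𝔻* = {z : |z| > 1}`. -/
def extDisk : Set ℂ := {z : ℂ | 1 < ‖z‖}

/-! ### Auxiliary definitions and lemmas for Grunsky's criterion -/

/-- The general term of the Grunsky double series. -/
def gterm (α : ℕ+ → ℕ+ → ℂ) (z ζ : ℂ) (p : ℕ+ × ℕ+) : ℂ :=
  α p.1 p.2 * z ^ (-((p.1 : ℕ) : ℤ)) * ζ ^ (-((p.2 : ℕ) : ℤ))

/-- Symmetrization of the Grunsky coefficients. -/
def gbar (α : ℕ+ → ℕ+ → ℂ) (m n : ℕ+) : ℂ := (α m n + α n m) / 2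

/-- The quadratic-form summand. -/
def gQ (α : ℕ+ → ℕ+ → ℂ) (x : ℕ+ → ℂ) (p : ℕ+ × ℕ+) : ℂ :=
  (Real.sqrt ((p.1 : ℝ) * (p.2 : ℝ)) : ℂ) * α p.1 p.2 * x p.1 * x p.2

lemma gr_isOpen (r : ℝ) : IsOpen {z : ℂ | r < ‖z‖} :=
  isOpen_lt continuous_const continuous_norm

lemma gr_preconnected (r : ℝ) (hr : 0 < r) : IsPreconnected {z : ℂ | r < ‖z‖} := by
  have hrank : 1 < Module.rank ℝ ℂ := by rw [rank_real_complex]; norm_num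
  have h1 : IsPreconnected ((Set.Ioi r) ×ˢ (Metric.sphere (0:ℂ) 1)) :=
    (isPreconnected_Ioi).prod (isPreconnected_sphere hrank 0 1)
  have h2 := h1.image (fun p : ℝ × ℂ => p.1 • p.2)
    ((continuous_fst.smul continuous_snd).continuousOn)
  convert h2 using 1
  ext z
  constructor
  · intro hz
    have h0 : ‖z‖ ≠ 0 := by
      have : (0:ℝ) < ‖z‖ := lt_trans hr hz
      exact ne_of_gt this
    refine ⟨(‖z‖, (‖z‖)⁻¹ • z), ⟨?_, ?_⟩, ?_⟩
    · exact hz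
    · simp only [Metric.mem_sphere, dist_zero_right, norm_smul, norm_inv,
        Real.norm_eq_abs]
      rw [_root_.abs_of_nonneg (norm_nonneg z), inv_mul_cancel₀ h0]
    · have h0' : ((‖z‖ : ℝ) : ℂ) ≠ 0 := by
        simp only [ne_eq, Complex.ofReal_eq_zero]; exact h0
      simp only [smul_eq_mul, Complex.real_smul]
      push_cast
      field_simp
  · rintro ⟨⟨t, u⟩, ⟨ht, hu⟩, rfl⟩
    simp only [Metric.mem_sphere, dist_zero_right] at hu
    simp only [Set.mem_setOf_eq, smul_eq_mul, Complex.real_smul]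
    rw [norm_mul, hu, mul_one, Complex.norm_real, Real.norm_eq_abs, abs_of_pos (hr.trans ht)]
    exact ht

lemma gr_abs_gterm (α : ℕ+ → ℕ+ → ℂ) (z ζ : ℂ) (p : ℕ+ × ℕ+) :
    ‖gterm α z ζ p‖ =
      ‖α p.1 p.2‖ * (‖z‖) ^ (-((p.1:ℕ):ℤ)) *
        (‖ζ‖) ^ (-((p.2:ℕ):ℤ)) := by
  simp [gterm, norm_mul, norm_zpow]

lemma gr_zpow_anti {a t : ℝ} (ha : 0 < a) (h : a ≤ t) {k : ℤ} (hk : k ≤ 0) :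
    t ^ k ≤ a ^ k := by
  obtain ⟨j, rfl⟩ : ∃ j : ℕ, k = -(j : ℤ) := ⟨k.natAbs, by omega⟩
  rw [zpow_neg, zpow_neg, zpow_natCast, zpow_natCast]
  exact inv_anti₀ (pow_pos ha _) (pow_le_pow_left₀ ha.le h _)

lemma gr_zpow_decay {a t : ℝ} (ha : 0 < a) (h : a ≤ t) (m : ℕ+) :
    t ^ (-((m:ℕ):ℤ)) ≤ (a / t) * a ^ (-((m:ℕ):ℤ)) := by
  have ht : 0 < t := ha.trans_le h
  have h1 : t ^ (-((m:ℕ):ℤ)) = t⁻¹ * t ^ (1 - ((m:ℕ):ℤ)) := by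
    rw [← zpow_neg_one t, ← zpow_add₀ ht.ne']
    congr 1; ring
  have h2 : t ^ (1 - ((m:ℕ):ℤ)) ≤ a ^ (1 - ((m:ℕ):ℤ)) := by
    apply gr_zpow_anti ha h
    have hm : 1 ≤ (m:ℕ) := m.one_le
    omega
  have h3 : a ^ (1 - ((m:ℕ):ℤ)) = a * a ^ (-((m:ℕ):ℤ)) := by
    rw [sub_eq_add_neg, zpow_add₀ ha.ne', zpow_one]
  rw [h1]
  calc t⁻¹ * t ^ (1 - ((m:ℕ):ℤ)) ≤ t⁻¹ * a ^ (1 - ((m:ℕ):ℤ)) := by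
        apply mul_le_mul_of_nonneg_left h2 (by positivity)
    _ = (a / t) * a ^ (-((m:ℕ):ℤ)) := by rw [h3]; field_simp

lemma gr_gterm_le (α : ℕ+ → ℕ+ → ℂ) {z ζ : ℂ} {a b : ℝ} (ha : 0 < a) (hb : 0 < b)
    (hza : a ≤ ‖z‖) (hζb : b ≤ ‖ζ‖) (p : ℕ+ × ℕ+) :
    ‖gterm α z ζ p‖ ≤ ‖gterm α ((a:ℝ):ℂ) ((b:ℝ):ℂ) p‖ := by
  rw [gr_abs_gterm, gr_abs_gterm]
  simp only [Complex.norm_real, Real.norm_eq_abs, abs_of_pos ha, abs_of_pos hb]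
  have h1 : (‖z‖) ^ (-((p.1:ℕ):ℤ)) ≤ a ^ (-((p.1:ℕ):ℤ)) :=
    gr_zpow_anti ha hza (by simp)
  have h2 : (‖ζ‖) ^ (-((p.2:ℕ):ℤ)) ≤ b ^ (-((p.2:ℕ):ℤ)) :=
    gr_zpow_anti hb hζb (by simp)
  have hα0 := norm_nonneg (α p.1 p.2)
  have hz0 : (0:ℝ) ≤ (‖z‖) ^ (-((p.1:ℕ):ℤ)) := by
    have := norm_nonneg z
    have : 0 < ‖z‖ := ha.trans_le hza
    positivity
  have hb0 : (0:ℝ) ≤ b ^ (-((p.2:ℕ):ℤ)) := by positivity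
  calc ‖α p.1 p.2‖ * (‖z‖) ^ (-((p.1:ℕ):ℤ)) * (‖ζ‖) ^ (-((p.2:ℕ):ℤ))
      ≤ ‖α p.1 p.2‖ * (‖z‖) ^ (-((p.1:ℕ):ℤ)) * b ^ (-((p.2:ℕ):ℤ)) := by
        apply mul_le_mul_of_nonneg_left h2 (by positivity)
    _ ≤ ‖α p.1 p.2‖ * a ^ (-((p.1:ℕ):ℤ)) * b ^ (-((p.2:ℕ):ℤ)) := by
        apply mul_le_mul_of_nonneg_right (mul_le_mul_of_nonneg_left h1 hα0) hb0

lemma gr_gterm_decay_left (α : ℕ+ → ℕ+ → ℂ) {ζ : ℂ} {a b t : ℝ}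
    (ha : 0 < a) (hb : 0 < b) (hat : a ≤ t) (hbζ : b ≤ ‖ζ‖) (p : ℕ+ × ℕ+) :
    ‖gterm α ((t:ℝ):ℂ) ζ p‖ ≤ (a / t) * ‖gterm α ((a:ℝ):ℂ) ((b:ℝ):ℂ) p‖ := by
  have ht : 0 < t := ha.trans_le hat
  rw [gr_abs_gterm, gr_abs_gterm]
  simp only [Complex.norm_real, Real.norm_eq_abs, abs_of_pos ha, abs_of_pos hb, abs_of_pos ht]
  have h1 : t ^ (-((p.1:ℕ):ℤ)) ≤ (a / t) * a ^ (-((p.1:ℕ):ℤ)) := gr_zpow_decay ha hat p.1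
  have h2 : (‖ζ‖) ^ (-((p.2:ℕ):ℤ)) ≤ b ^ (-((p.2:ℕ):ℤ)) :=
    gr_zpow_anti hb hbζ (by simp)
  have hα0 := norm_nonneg (α p.1 p.2)
  have e2 : (0:ℝ) ≤ (‖ζ‖) ^ (-((p.2:ℕ):ℤ)) := by
    have h0 : 0 < ‖ζ‖ := hb.trans_le hbζ
    positivity
  calc ‖α p.1 p.2‖ * t ^ (-((p.1:ℕ):ℤ)) * (‖ζ‖) ^ (-((p.2:ℕ):ℤ))
      ≤ ‖α p.1 p.2‖ * ((a/t) * a ^ (-((p.1:ℕ):ℤ))) * b ^ (-((p.2:ℕ):ℤ)) := by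
        apply mul_le_mul (mul_le_mul_of_nonneg_left h1 hα0) h2 e2 (by positivity)
    _ = (a/t) * (‖α p.1 p.2‖ * a ^ (-((p.1:ℕ):ℤ)) * b ^ (-((p.2:ℕ):ℤ))) := by ring

lemma gr_gterm_decay_right (α : ℕ+ → ℕ+ → ℂ) {ζ : ℂ} {a b t : ℝ}
    (ha : 0 < a) (hb : 0 < b) (haζ : a ≤ ‖ζ‖) (hbt : b ≤ t) (p : ℕ+ × ℕ+) :
    ‖gterm α ζ ((t:ℝ):ℂ) p‖ ≤ (b / t) * ‖gterm α ((a:ℝ):ℂ) ((b:ℝ):ℂ) p‖ := by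
  have ht : 0 < t := hb.trans_le hbt
  rw [gr_abs_gterm, gr_abs_gterm]
  simp only [Complex.norm_real, Real.norm_eq_abs, abs_of_pos ha, abs_of_pos hb, abs_of_pos ht]
  have h1 : (‖ζ‖) ^ (-((p.1:ℕ):ℤ)) ≤ a ^ (-((p.1:ℕ):ℤ)) :=
    gr_zpow_anti ha haζ (by simp)
  have h2 : t ^ (-((p.2:ℕ):ℤ)) ≤ (b / t) * b ^ (-((p.2:ℕ):ℤ)) := gr_zpow_decay hb hbt p.2
  have hα0 := norm_nonneg (α p.1 p.2)
  have e2 : (0:ℝ) ≤ t ^ (-((p.2:ℕ):ℤ)) := by positivity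
  calc ‖α p.1 p.2‖ * (‖ζ‖) ^ (-((p.1:ℕ):ℤ)) * t ^ (-((p.2:ℕ):ℤ))
      ≤ ‖α p.1 p.2‖ * a ^ (-((p.1:ℕ):ℤ)) * ((b/t) * b ^ (-((p.2:ℕ):ℤ))) := by
        apply mul_le_mul (mul_le_mul_of_nonneg_left h1 hα0) h2 e2 (by positivity)
    _ = (b/t) * (‖α p.1 p.2‖ * a ^ (-((p.1:ℕ):ℤ)) * b ^ (-((p.2:ℕ):ℤ))) := by ring

lemma gr_summable_geom {a b : ℝ} (ha : 0 < a) (ha1 : a < 1) (hb : 0 < b) (hb1 : b < 1)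
    (C : ℝ) : Summable (fun p : ℕ+ × ℕ+ => C * (a ^ ((p.1:ℕ)) * b ^ ((p.2:ℕ)))) := by
  have h1 : Summable (fun n : ℕ+ => a ^ (n:ℕ)) :=
    (summable_geometric_of_lt_one ha.le ha1).comp_injective PNat.coe_injective
  have h2 : Summable (fun n : ℕ+ => b ^ (n:ℕ)) :=
    (summable_geometric_of_lt_one hb.le hb1).comp_injective PNat.coe_injective
  have h3 := Summable.mul_of_nonneg h1 h2 (fun n => pow_nonneg ha.le _)
    (fun n => pow_nonneg hb.le _)
  exact h3.mul_left C

lemma gr_gterm_le_geom {β : ℕ+ → ℕ+ → ℂ} (hβ : ∀ m n : ℕ+, ‖β m n‖ ≤ 2)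
    {w ζ : ℂ} {s t : ℝ} (hs : 0 < s) (ht : 0 < t) (hws : s ≤ ‖w‖)
    (hζt : t ≤ ‖ζ‖) (p : ℕ+ × ℕ+) :
    ‖gterm β w ζ p‖ ≤ 2 * ((s⁻¹) ^ ((p.1:ℕ)) * (t⁻¹) ^ ((p.2:ℕ))) := by
  rw [gr_abs_gterm]
  have h1 : (‖w‖) ^ (-((p.1:ℕ):ℤ)) ≤ (s⁻¹) ^ ((p.1:ℕ)) := by
    calc (‖w‖) ^ (-((p.1:ℕ):ℤ)) ≤ s ^ (-((p.1:ℕ):ℤ)) :=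
          gr_zpow_anti hs hws (by simp)
      _ = (s⁻¹) ^ ((p.1:ℕ)) := by rw [zpow_neg, zpow_natCast, inv_pow]
  have h2 : (‖ζ‖) ^ (-((p.2:ℕ):ℤ)) ≤ (t⁻¹) ^ ((p.2:ℕ)) := by
    calc (‖ζ‖) ^ (-((p.2:ℕ):ℤ)) ≤ t ^ (-((p.2:ℕ):ℤ)) :=
          gr_zpow_anti ht hζt (by simp)
      _ = (t⁻¹) ^ ((p.2:ℕ)) := by rw [zpow_neg, zpow_natCast, inv_pow]
  have e1 : (0:ℝ) ≤ (‖w‖) ^ (-((p.1:ℕ):ℤ)) := by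
    have h0 : 0 < ‖w‖ := hs.trans_le hws
    positivity
  have e2 : (0:ℝ) ≤ (‖ζ‖) ^ (-((p.2:ℕ):ℤ)) := by
    have h0 : 0 < ‖ζ‖ := ht.trans_le hζt
    positivity
  have hβ0 := norm_nonneg (β p.1 p.2)
  calc ‖β p.1 p.2‖ * (‖w‖) ^ (-((p.1:ℕ):ℤ)) *
        (‖ζ‖) ^ (-((p.2:ℕ):ℤ))
      ≤ 2 * ((s⁻¹) ^ ((p.1:ℕ))) * ((t⁻¹) ^ ((p.2:ℕ))) := by
        apply mul_le_mul (mul_le_mul (hβ p.1 p.2) h1 e1 (by norm_num)) h2 e2 (by positivity)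
    _ = 2 * ((s⁻¹) ^ ((p.1:ℕ)) * (t⁻¹) ^ ((p.2:ℕ))) := by ring

lemma gr_tsumHolo {γ : ℕ+ × ℕ+ → ℂ} {M : ℕ+ × ℕ+ → ℝ} (e : ℕ+ × ℕ+ → ℕ+) {r : ℝ}
    (hr : 0 < r) (hM : Summable M)
    (hb : ∀ p : ℕ+ × ℕ+, ∀ z : ℂ, r ≤ ‖z‖ →
      ‖γ p * z ^ (-(((e p):ℕ):ℤ))‖ ≤ M p) :
    DifferentiableOn ℂ (fun z => ∑' p : ℕ+ × ℕ+, γ p * z ^ (-(((e p):ℕ):ℤ)))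
      {z : ℂ | r < ‖z‖} := by
  apply differentiableOn_tsum_of_summable_norm hM
    (fun p => ?_) (isOpen_lt continuous_const continuous_norm)
    (fun p w hw => hb p w (le_of_lt hw))
  intro z hz
  have hz0 : z ≠ 0 := by
    intro h; rw [h] at hz; simp only [Set.mem_setOf_eq, norm_zero] at hz
    exact absurd hz (not_lt.mpr hr.le)
  exact ((differentiableAt_zpow.mpr (Or.inl hz0)).const_mul _).differentiableWithinAt

lemma gr_diffOn_left (β : ℕ+ → ℕ+ → ℂ) (ζ : ℂ) (r : ℝ) (hr : 0 < r)
    (hmaj : ∀ s : ℝ, r < s → ∃ M : ℕ+ × ℕ+ → ℝ, Summable M ∧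
      ∀ p : ℕ+ × ℕ+, ∀ w : ℂ, s ≤ ‖w‖ → ‖gterm β w ζ p‖ ≤ M p) :
    DifferentiableOn ℂ (fun z => ∑' p : ℕ+ × ℕ+, gterm β z ζ p) {z : ℂ | r < ‖z‖} := by
  intro z hz
  simp only [Set.mem_setOf_eq] at hz
  set s := (r + ‖z‖) / 2 with hs
  have hrs : r < s := by rw [hs]; linarith
  have hsz : s < ‖z‖ := by rw [hs]; linarith
  obtain ⟨M, hM, hMb⟩ := hmaj s hrs
  have hdiff : DifferentiableOn ℂ (fun w => ∑' p : ℕ+ × ℕ+, gterm β w ζ p)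
      {w : ℂ | s < ‖w‖} := by
    have h0 := gr_tsumHolo (γ := fun p : ℕ+ × ℕ+ => β p.1 p.2 * ζ ^ (-((p.2 : ℕ) : ℤ)))
      (e := Prod.fst) (hr.trans hrs) hM (fun p w hw => by
        have : (fun p : ℕ+ × ℕ+ => β p.1 p.2 * ζ ^ (-((p.2 : ℕ) : ℤ))) p *
            w ^ (-(((p.1 : ℕ)) : ℤ)) = gterm β w ζ p := by
          simp only [gterm]; ring
        rw [this]; exact hMb p w hw)
    have heq : (fun w => ∑' p : ℕ+ × ℕ+, (fun p : ℕ+ × ℕ+ =>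
        β p.1 p.2 * ζ ^ (-((p.2 : ℕ) : ℤ))) p * w ^ (-(((p.1 : ℕ)) : ℤ))) =
        (fun w => ∑' p : ℕ+ × ℕ+, gterm β w ζ p) := by
      funext w
      apply tsum_congr
      intro p
      simp only [gterm]; ring
    rwa [heq] at h0
  have hopen : IsOpen {w : ℂ | s < ‖w‖} :=
    isOpen_lt continuous_const continuous_norm
  exact ((hdiff.differentiableAt (hopen.mem_nhds hsz)).differentiableWithinAt)

lemma gr_diffOn_right (β : ℕ+ → ℕ+ → ℂ) (ζ : ℂ) (r : ℝ) (hr : 0 < r)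
    (hmaj : ∀ s : ℝ, r < s → ∃ M : ℕ+ × ℕ+ → ℝ, Summable M ∧
      ∀ p : ℕ+ × ℕ+, ∀ w : ℂ, s ≤ ‖w‖ → ‖gterm β ζ w p‖ ≤ M p) :
    DifferentiableOn ℂ (fun z => ∑' p : ℕ+ × ℕ+, gterm β ζ z p) {z : ℂ | r < ‖z‖} := by
  intro z hz
  simp only [Set.mem_setOf_eq] at hz
  set s := (r + ‖z‖) / 2 with hs
  have hrs : r < s := by rw [hs]; linarith
  have hsz : s < ‖z‖ := by rw [hs]; linarith
  obtain ⟨M, hM, hMb⟩ := hmaj s hrs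
  have hdiff : DifferentiableOn ℂ (fun w => ∑' p : ℕ+ × ℕ+, gterm β ζ w p)
      {w : ℂ | s < ‖w‖} := by
    have h0 := gr_tsumHolo (γ := fun p : ℕ+ × ℕ+ => β p.1 p.2 * ζ ^ (-((p.1 : ℕ) : ℤ)))
      (e := Prod.snd) (hr.trans hrs) hM (fun p w hw => by
        have : (fun p : ℕ+ × ℕ+ => β p.1 p.2 * ζ ^ (-((p.1 : ℕ) : ℤ))) p *
            w ^ (-(((p.2 : ℕ)) : ℤ)) = gterm β ζ w p := by
          simp only [gterm]
        rw [this]; exact hMb p w hw)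
    have heq : (fun w => ∑' p : ℕ+ × ℕ+, (fun p : ℕ+ × ℕ+ =>
        β p.1 p.2 * ζ ^ (-((p.1 : ℕ) : ℤ))) p * w ^ (-(((p.2 : ℕ)) : ℤ))) =
        (fun w => ∑' p : ℕ+ × ℕ+, gterm β ζ w p) := by
      funext w
      apply tsum_congr
      intro p
      simp only [gterm]
    rwa [heq] at h0
  have hopen : IsOpen {w : ℂ | s < ‖w‖} :=
    isOpen_lt continuous_const continuous_norm
  exact ((hdiff.differentiableAt (hopen.mem_nhds hsz)).differentiableWithinAt)

lemma gr_diag {α : ℕ+ → ℕ+ → ℂ}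
    (hG : ∀ x : ℕ+ → ℂ, Summable (fun n : ℕ+ => ‖x n‖ ^ 2) →
      (∑' n : ℕ+, ‖x n‖ ^ 2) = 1 →
      ∃ s : ℂ, HasSum (gQ α x) s ∧ ‖s‖ ≤ 1) (m : ℕ+) :
    ‖((m:ℂ) * α m m)‖ ≤ 1 := by
  classical
  set x : ℕ+ → ℂ := fun k => if k = m then (1:ℂ) else 0 with hx
  have hsupp : ∀ n : ℕ+, n ∉ ({m} : Finset ℕ+) → ‖x n‖ ^ 2 = 0 := by
    intro n hn
    simp only [Finset.mem_singleton] at hn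
    simp [hx, if_neg hn]
  have hsum : Summable (fun n : ℕ+ => ‖x n‖ ^ 2) :=
    summable_of_ne_finset_zero hsupp
  have htsum : (∑' n : ℕ+, ‖x n‖ ^ 2) = 1 := by
    rw [tsum_eq_single m (fun n hn => by simp [hx, if_neg hn])]
    simp [hx]
  obtain ⟨s, hs, hs1⟩ := hG x hsum htsum
  have hzero : ∀ p : ℕ+ × ℕ+, p ≠ (m, m) → gQ α x p = 0 := by
    rintro ⟨i, j⟩ hp
    have : i ≠ m ∨ j ≠ m := by
      by_contra h
      push_neg at h
      exact hp (by simp [h.1, h.2])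
    rcases this with h | h <;> simp [gQ, hx, if_neg h]
  have hs' : HasSum (gQ α x) (gQ α x (m, m)) := hasSum_single _ hzero
  have hval : gQ α x (m, m) = (m:ℂ) * α m m := by
    simp only [gQ, hx, if_pos rfl, mul_one]
    have : Real.sqrt ((m:ℝ) * (m:ℝ)) = (m:ℝ) := Real.sqrt_mul_self (by positivity)
    rw [this]
    push_cast
    ring
  rw [hs.unique hs', hval] at hs1
  exact hs1

lemma gr_offdiag {α : ℕ+ → ℕ+ → ℂ}
    (hG : ∀ x : ℕ+ → ℂ, Summable (fun n : ℕ+ => ‖x n‖ ^ 2) →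
      (∑' n : ℕ+, ‖x n‖ ^ 2) = 1 →
      ∃ s : ℂ, HasSum (gQ α x) s ∧ ‖s‖ ≤ 1)
    (hdiag : ∀ m : ℕ+, ‖((m:ℂ) * α m m)‖ ≤ 1)
    {m n : ℕ+} (hmn : m ≠ n) :
    ‖((Real.sqrt ((m:ℝ) * (n:ℝ)) : ℂ) * (α m n + α n m))‖ ≤ 4 := by
  classical
  set c : ℂ := (((Real.sqrt 2)⁻¹ : ℝ) : ℂ) with hc
  have hcabs : ‖c‖ ^ 2 = 1/2 := by
    rw [hc, Complex.norm_real, Real.norm_eq_abs, _root_.abs_of_nonneg (by positivity)]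
    rw [inv_pow, Real.sq_sqrt (by norm_num : (0:ℝ) ≤ 2)]
    norm_num
  have hcc : c * c = (1/2 : ℂ) := by
    rw [hc]
    norm_cast
    rw [← mul_inv]
    rw [Real.mul_self_sqrt (by norm_num)]
    norm_num
  set x : ℕ+ → ℂ := fun k => if k = m ∨ k = n then c else 0 with hx
  have hxm : x m = c := by simp [hx]
  have hxn : x n = c := by simp [hx]
  have hsupp : ∀ k : ℕ+, k ∉ ({m, n} : Finset ℕ+) → ‖x k‖ ^ 2 = 0 := by
    intro k hk
    simp only [Finset.mem_insert, Finset.mem_singleton] at hk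
    push_neg at hk
    simp [hx, hk.1, hk.2]
  have hsum : Summable (fun k : ℕ+ => ‖x k‖ ^ 2) :=
    summable_of_ne_finset_zero hsupp
  have htsum : (∑' k : ℕ+, ‖x k‖ ^ 2) = 1 := by
    rw [tsum_eq_sum hsupp, Finset.sum_pair hmn, hxm, hxn, hcabs]
    norm_num
  obtain ⟨s, hs, hs1⟩ := hG x hsum htsum
  set T : Finset (ℕ+ × ℕ+) := ({m, n} : Finset ℕ+) ×ˢ ({m, n} : Finset ℕ+) with hT
  have hzero : ∀ p : ℕ+ × ℕ+, p ∉ T → gQ α x p = 0 := by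
    rintro ⟨i, j⟩ hp
    rw [hT, Finset.mem_product] at hp
    push_neg at hp
    simp only [Finset.mem_insert, Finset.mem_singleton] at hp
    by_cases hi : i = m ∨ i = n
    · have hj := hp hi
      simp [gQ, hx, if_neg hj]
    · simp [gQ, hx, if_neg hi]
  have hs' : HasSum (gQ α x) (∑ p ∈ T, gQ α x p) := hasSum_sum_of_ne_finset_zero hzero
  have hsval : s = ∑ p ∈ T, gQ α x p := hs.unique hs'
  have hTsum : ∑ p ∈ T, gQ α x p
      = gQ α x (m,m) + gQ α x (m,n) + gQ α x (n,m) + gQ α x (n,n) := by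
    rw [hT, Finset.sum_product, Finset.sum_pair hmn, Finset.sum_pair hmn, Finset.sum_pair hmn]
    ring
  have hmm : gQ α x (m,m) = (1/2 : ℂ) * ((m:ℂ) * α m m) := by
    simp only [gQ, hxm]
    rw [show Real.sqrt ((m:ℝ)*(m:ℝ)) = (m:ℝ) from Real.sqrt_mul_self (by positivity)]
    rw [mul_assoc _ c c, hcc]
    push_cast; ring
  have hnn : gQ α x (n,n) = (1/2 : ℂ) * ((n:ℂ) * α n n) := by
    simp only [gQ, hxn]
    rw [show Real.sqrt ((n:ℝ)*(n:ℝ)) = (n:ℝ) from Real.sqrt_mul_self (by positivity)]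
    rw [mul_assoc _ c c, hcc]
    push_cast; ring
  have hmn' : gQ α x (m,n) = (1/2 : ℂ) * ((Real.sqrt ((m:ℝ)*(n:ℝ)) : ℂ) * α m n) := by
    simp only [gQ, hxm, hxn]
    rw [mul_assoc _ c c, hcc]; ring
  have hnm' : gQ α x (n,m) = (1/2 : ℂ) * ((Real.sqrt ((m:ℝ)*(n:ℝ)) : ℂ) * α n m) := by
    simp only [gQ, hxm, hxn]
    rw [show ((n:ℝ) * (m:ℝ)) = ((m:ℝ) * (n:ℝ)) by ring]
    rw [mul_assoc _ c c, hcc]; ring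
  have key : (Real.sqrt ((m:ℝ)*(n:ℝ)) : ℂ) * (α m n + α n m)
      = 2 * s - ((m:ℂ) * α m m) - ((n:ℂ) * α n n) := by
    rw [hsval, hTsum, hmm, hnn, hmn', hnm']
    ring
  rw [key]
  have htri : ‖2 * s - ((m:ℂ) * α m m) - ((n:ℂ) * α n n)‖
      ≤ ‖2 * s‖ + ‖(m:ℂ) * α m m‖ + ‖(n:ℂ) * α n n‖ := by
    calc ‖2 * s - ((m:ℂ) * α m m) - ((n:ℂ) * α n n)‖
        ≤ ‖2 * s - ((m:ℂ) * α m m)‖ + ‖(n:ℂ) * α n n‖ := norm_sub_le _ _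
      _ ≤ (‖2 * s‖ + ‖(m:ℂ) * α m m‖) + ‖(n:ℂ) * α n n‖ := by
          gcongr
          exact norm_sub_le _ _
  refine htri.trans ?_
  have h2s : ‖2 * s‖ ≤ 2 := by
    rw [norm_mul, Complex.norm_two]
    exact (mul_le_mul_of_nonneg_left hs1 (by norm_num)).trans_eq (by norm_num)
  have := hdiag m
  have := hdiag n
  linarith

lemma gr_bar_bound {α : ℕ+ → ℕ+ → ℂ}
    (hdiag : ∀ m : ℕ+, ‖((m:ℂ) * α m m)‖ ≤ 1)
    (hoff : ∀ m n : ℕ+, m ≠ n →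
      ‖((Real.sqrt ((m:ℝ) * (n:ℝ)) : ℂ) * (α m n + α n m))‖ ≤ 4)
    (m n : ℕ+) : ‖gbar α m n‖ ≤ 2 := by
  by_cases hmn : m = n
  · subst hmn
    have h1 := hdiag m
    have hm1 : (1:ℝ) ≤ (m:ℝ) := by exact_mod_cast m.one_le
    have : ‖α m m‖ ≤ 1 := by
      rw [norm_mul] at h1
      have habs : ‖((m:ℂ))‖ = (m:ℝ) := by
        rw [show ((m:ℂ)) = (((m:ℝ)):ℂ) by push_cast; ring, Complex.norm_real, Real.norm_eq_abs,
          _root_.abs_of_nonneg (by linarith)]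
      rw [habs] at h1
      nlinarith [norm_nonneg (α m m)]
    calc ‖gbar α m m‖ = ‖α m m‖ := by
          simp only [gbar]
          rw [show (α m m + α m m) / 2 = α m m by ring]
      _ ≤ 2 := this.trans (by norm_num)
  · have h4 := hoff m n hmn
    have hsq : (1:ℝ) ≤ Real.sqrt ((m:ℝ) * (n:ℝ)) := by
      rw [show (1:ℝ) = Real.sqrt 1 by simp]
      apply Real.sqrt_le_sqrt
      have hm1 : (1:ℝ) ≤ (m:ℝ) := by exact_mod_cast m.one_le
      have hn1 : (1:ℝ) ≤ (n:ℝ) := by exact_mod_cast n.one_le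
      nlinarith
    rw [norm_mul] at h4
    have habs : ‖((Real.sqrt ((m:ℝ) * (n:ℝ)) : ℂ))‖ = Real.sqrt ((m:ℝ) * (n:ℝ)) := by
      rw [Complex.norm_real, Real.norm_eq_abs, _root_.abs_of_nonneg (Real.sqrt_nonneg _)]
    rw [habs] at h4
    have hle : ‖α m n + α n m‖ ≤ 4 := by
      nlinarith [norm_nonneg (α m n + α n m)]
    simp only [gbar]
    rw [norm_div, Complex.norm_two]
    linarith

/-- **Grunsky's univalence criterion.** Let `R > 1` and let `f` be holomorphic on
`{|z| > R}` with `f z - z` bounded there, with coefficients `α` such that for all distinct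
`z, ζ` with `|z| > R`, `|ζ| > R` the series `∑ α m n z^{-m} ζ^{-n}` converges absolutely and
`(f z - f ζ)/(z - ζ) = exp(-∑ α m n z^{-m} ζ^{-n})`.  If for every unit vector `x ∈ ℓ²`
the series `∑ √(mn) α m n x m x n` converges with sum of modulus at most `1`,
then `f` extends to a holomorphic injective function on all of `𝔻*`. -/
theorem grunsky_univalence_criterion (R : ℝ) (hR : 1 < R) (f : ℂ → ℂ) (α : ℕ+ → ℕ+ → ℂ)
    (hf : DifferentiableOn ℂ f {z : ℂ | R < ‖z‖})
    (hb : ∃ C : ℝ, ∀ z : ℂ, R < ‖z‖ → ‖f z - z‖ ≤ C)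
    (hα : ∀ z ζ : ℂ, R < ‖z‖ → R < ‖ζ‖ → z ≠ ζ →
      Summable (fun p : ℕ+ × ℕ+ =>
        ‖α p.1 p.2 * z ^ (-((p.1 : ℕ) : ℤ)) * ζ ^ (-((p.2 : ℕ) : ℤ))‖) ∧
      (f z - f ζ) / (z - ζ) =
        Complex.exp (- ∑' p : ℕ+ × ℕ+,
          α p.1 p.2 * z ^ (-((p.1 : ℕ) : ℤ)) * ζ ^ (-((p.2 : ℕ) : ℤ))))
    (hG : ∀ x : ℕ+ → ℂ, Summable (fun n : ℕ+ => ‖x n‖ ^ 2) →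
      (∑' n : ℕ+, ‖x n‖ ^ 2) = 1 →
      ∃ s : ℂ,
        HasSum (fun p : ℕ+ × ℕ+ =>
          (Real.sqrt ((p.1 : ℝ) * (p.2 : ℝ)) : ℂ) * α p.1 p.2 * x p.1 * x p.2) s ∧
        ‖s‖ ≤ 1) :
    ∃ F : ℂ → ℂ, DifferentiableOn ℂ F extDisk ∧ Set.InjOn F extDisk ∧
      ∀ z : ℂ, R < ‖z‖ → F z = f z := by
  classical
  have hR0 : (0:ℝ) < R := lt_trans one_pos hR
  have hUopen : IsOpen {z : ℂ | R < ‖z‖} := gr_isOpen R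
  have hUpre : IsPreconnected {z : ℂ | R < ‖z‖} := gr_preconnected R hR0
  have hEopen : IsOpen extDisk := gr_isOpen 1
  have hEpre : IsPreconnected extDisk := gr_preconnected 1 one_pos
  -- restate hα via gterm
  have hα' : ∀ z ζ : ℂ, R < ‖z‖ → R < ‖ζ‖ → z ≠ ζ →
      Summable (fun p : ℕ+ × ℕ+ => ‖gterm α z ζ p‖) ∧
      (f z - f ζ) / (z - ζ) =
        Complex.exp (- ∑' p : ℕ+ × ℕ+, gterm α z ζ p) := hα
  -- coefficient bounds for the symmetrization
  have hG' : ∀ x : ℕ+ → ℂ, Summable (fun n : ℕ+ => ‖x n‖ ^ 2) →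
      (∑' n : ℕ+, ‖x n‖ ^ 2) = 1 →
      ∃ s : ℂ, HasSum (gQ α x) s ∧ ‖s‖ ≤ 1 := hG
  have hdiag := gr_diag hG'
  have hbar : ∀ m n : ℕ+, ‖gbar α m n‖ ≤ 2 :=
    gr_bar_bound hdiag (fun m n hmn => gr_offdiag hG' hdiag hmn)
  -- auxiliary real points with summable majorants
  have hpick : ∀ c d : ℝ, R < c → R < d → ∃ a b : ℝ,
      R < a ∧ a ≤ c ∧ R < b ∧ b ≤ d ∧
      Summable (fun p : ℕ+ × ℕ+ => ‖gterm α ((a:ℝ):ℂ) ((b:ℝ):ℂ) p‖) := by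
    intro c d hc hd
    set m := min c d with hm
    have hmR : R < m := lt_min hc hd
    set a := (3*R + m)/4 with ha
    set b := (R + m)/2 with hb'
    have haR : R < a := by rw [ha]; linarith
    have hbR : R < b := by rw [hb']; linarith
    have ham : a ≤ m := by rw [ha]; linarith
    have hbm : b ≤ m := by rw [hb']; linarith
    have hab : a < b := by rw [ha, hb']; linarith
    have habsa : ‖((a:ℝ):ℂ)‖ = a := by
      rw [Complex.norm_real, Real.norm_eq_abs, abs_of_pos (hR0.trans haR)]
    have habsb : ‖((b:ℝ):ℂ)‖ = b := by
      rw [Complex.norm_real, Real.norm_eq_abs, abs_of_pos (hR0.trans hbR)]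
    have hne : ((a:ℝ):ℂ) ≠ ((b:ℝ):ℂ) := by
      simp only [ne_eq, Complex.ofReal_inj]
      exact ne_of_lt hab
    refine ⟨a, b, haR, ham.trans (min_le_left c d), hbR, hbm.trans (min_le_right c d), ?_⟩
    have := (hα' ((a:ℝ):ℂ) ((b:ℝ):ℂ) (by rw [habsa]; exact haR) (by rw [habsb]; exact hbR) hne).1
    exact this
  -- summability everywhere on the region
  have hSummAbs : ∀ z ζ : ℂ, R < ‖z‖ → R < ‖ζ‖ →
      Summable (fun p : ℕ+ × ℕ+ => ‖gterm α z ζ p‖) := by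
    intro z ζ hz hζ
    obtain ⟨a, b, ha, hac, hb', hbd, hsum⟩ := hpick (‖z‖) (‖ζ‖) hz hζ
    exact Summable.of_nonneg_of_le (fun p => norm_nonneg _)
      (fun p => gr_gterm_le α (hR0.trans ha) (hR0.trans hb') hac hbd p) hsum
  have hSumm : ∀ z ζ : ℂ, R < ‖z‖ → R < ‖ζ‖ →
      Summable (gterm α z ζ) := by
    intro z ζ hz hζ
    apply Summable.of_norm
    simpa using hSummAbs z ζ hz hζ
  -- the (asymmetric) Grunsky sum
  set S : ℂ → ℂ → ℂ := fun z ζ => ∑' p : ℕ+ × ℕ+, gterm α z ζ p with hSdef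
  have hExp : ∀ z ζ : ℂ, R < ‖z‖ → R < ‖ζ‖ → z ≠ ζ →
      f z - f ζ = (z - ζ) * Complex.exp (-(S z ζ)) := by
    intro z ζ hz hζ hne
    have h2 := (hα' z ζ hz hζ hne).2
    have hzζ : z - ζ ≠ 0 := sub_ne_zero.mpr hne
    rw [div_eq_iff hzζ] at h2
    rw [h2, hSdef]
    ring
  -- holomorphy of S in each variable
  have hdiffS1 : ∀ ζ : ℂ, R < ‖ζ‖ →
      DifferentiableOn ℂ (fun z => S z ζ) {z : ℂ | R < ‖z‖} := by
    intro ζ hζ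
    simp only [hSdef]
    apply gr_diffOn_left α ζ R hR0
    intro s hs
    obtain ⟨a, b, ha, has, hb', hbζ, hsum⟩ := hpick s (‖ζ‖) hs hζ
    exact ⟨_, hsum, fun p w hw =>
      gr_gterm_le α (hR0.trans ha) (hR0.trans hb') (has.trans hw) hbζ p⟩
  have hdiffS2 : ∀ ζ : ℂ, R < ‖ζ‖ →
      DifferentiableOn ℂ (fun z => S ζ z) {z : ℂ | R < ‖z‖} := by
    intro ζ hζ
    simp only [hSdef]
    apply gr_diffOn_right α ζ R hR0
    intro s hs
    obtain ⟨a, b, ha, haζ, hb', hbs, hsum⟩ := hpick (‖ζ‖) s hζ hs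
    exact ⟨_, hsum, fun p w hw =>
      gr_gterm_le α (hR0.trans ha) (hR0.trans hb') haζ (hbs.trans hw) p⟩
  -- symmetry of S
  have hsymm : ∀ z ζ : ℂ, R < ‖z‖ → R < ‖ζ‖ → S z ζ = S ζ z := by
    intro z ζ hzR hζR
    set d : ℂ → ℂ := fun w => S w ζ - S ζ w with hd
    have hdU : DifferentiableOn ℂ d {w : ℂ | R < ‖w‖} :=
      (hdiffS1 ζ hζR).sub (hdiffS2 ζ hζR)
    have hone : ∀ w : ℂ, R < ‖w‖ → w ≠ ζ → Complex.exp (d w) = 1 := by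
      intro w hw hne
      have e1 := (hα' w ζ hw hζR hne).2
      have e2 := (hα' ζ w hζR hw (Ne.symm hne)).2
      have e3 : (f ζ - f w) / (ζ - w) = (f w - f ζ) / (w - ζ) := by
        rw [← neg_sub (f w) (f ζ), ← neg_sub w ζ, neg_div_neg_eq]
      have e4 : Complex.exp (-(S w ζ)) = Complex.exp (-(S ζ w)) := by
        calc Complex.exp (-(S w ζ)) = (f w - f ζ) / (w - ζ) := e1.symm
          _ = (f ζ - f w) / (ζ - w) := e3.symm
          _ = Complex.exp (-(S ζ w)) := e2
      have e5 : Complex.exp (S w ζ) = Complex.exp (S ζ w) := by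
        have := congrArg (fun u => u⁻¹) e4
        simpa only [← Complex.exp_neg, neg_neg] using this
      have : Complex.exp (d w) = Complex.exp (S w ζ) / Complex.exp (S ζ w) := by
        rw [hd]
        simp only [Complex.exp_sub]
      rw [this, e5, div_self (Complex.exp_ne_zero _)]
    have hderiv0 : ∀ w : ℂ, R < ‖w‖ → w ≠ ζ → deriv d w = 0 := by
      intro w hw hne
      have hdw : DifferentiableAt ℂ d w := hdU.differentiableAt (hUopen.mem_nhds hw)
      have h1 : HasDerivAt (fun x => Complex.exp (d x)) (Complex.exp (d w) * deriv d w) w :=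
        (hdw.hasDerivAt).cexp
      have hmem : ({w' : ℂ | R < ‖w'‖} ∩ {ζ}ᶜ) ∈ nhds w :=
        (hUopen.inter isOpen_compl_singleton).mem_nhds ⟨hw, hne⟩
      have h2 : (fun x => Complex.exp (d x)) =ᶠ[nhds w] fun _ => 1 :=
        Filter.eventuallyEq_of_mem hmem (fun x hx => hone x hx.1 hx.2)
      have h3 : HasDerivAt (fun x => Complex.exp (d x)) 0 w :=
        (hasDerivAt_const w (1:ℂ)).congr_of_eventuallyEq h2
      have h4 := h1.unique h3
      rcases mul_eq_zero.mp h4 with h | h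
      · exact absurd h (Complex.exp_ne_zero _)
      · exact h
    -- pick a real base point distinct from ζ
    have hz₀ : ∃ z₀ : ℂ, R < ‖z₀‖ ∧ z₀ ≠ ζ ∧ ∀ w : ℂ, R < ‖w‖ → d w = d z₀ := by
      obtain ⟨z₀, hz₀U, hz₀ζ⟩ : ∃ z₀ : ℂ, R < ‖z₀‖ ∧ z₀ ≠ ζ := by
        by_cases h2R : ((2*R : ℝ) : ℂ) = ζ
        · refine ⟨((3*R : ℝ) : ℂ), ?_, ?_⟩
          · rw [Complex.norm_real, Real.norm_eq_abs, abs_of_pos (by linarith)]; linarith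
          · rw [← h2R]
            simp only [ne_eq, Complex.ofReal_inj]
            intro h; nlinarith
        · refine ⟨((2*R : ℝ) : ℂ), ?_, h2R⟩
          rw [Complex.norm_real, Real.norm_eq_abs, abs_of_pos (by linarith)]; linarith
      refine ⟨z₀, hz₀U, hz₀ζ, ?_⟩
      -- constancy near z₀
      have hmem : ({w : ℂ | R < ‖w‖} ∩ {ζ}ᶜ) ∈ nhds z₀ :=
        (hUopen.inter isOpen_compl_singleton).mem_nhds ⟨hz₀U, hz₀ζ⟩
      obtain ⟨ε, hε0, hball⟩ := Metric.mem_nhds_iff.mp hmem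
      have hconstball : ∀ x ∈ Metric.ball z₀ ε, d x = d z₀ := by
        intro x hx
        apply Convex.is_const_of_fderivWithin_eq_zero (convex_ball z₀ ε)
          (hdU.mono (fun y hy => (hball hy).1)) ?_ hx (Metric.mem_ball_self hε0)
        intro y hy
        have hyU : R < ‖y‖ := (hball hy).1
        have hyζ : y ≠ ζ := (hball hy).2
        have hdy : DifferentiableAt ℂ d y := hdU.differentiableAt (hUopen.mem_nhds hyU)
        have h0 : deriv d y = 0 := hderiv0 y hyU hyζ
        have hfd : HasFDerivAt d (0 : ℂ →L[ℂ] ℂ) y := by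
          have h := hdy.hasDerivAt
          rw [h0] at h
          have heq : (ContinuousLinearMap.smulRight (1 : ℂ →L[ℂ] ℂ) (0:ℂ)) = 0 := by
            ext v; simp
          rw [← heq]
          exact h.hasFDerivAt
        exact (hfd.hasFDerivWithinAt).fderivWithin (Metric.isOpen_ball.uniqueDiffOn y hy)
      have heventually : d =ᶠ[nhds z₀] (fun _ => d z₀) :=
        Filter.eventuallyEq_of_mem (Metric.ball_mem_nhds z₀ hε0) hconstball
      have hanalytic := hdU.analyticOnNhd hUopen
      have hconstAll := hanalytic.eqOn_of_preconnected_of_eventuallyEq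
        (analyticOnNhd_const) hUpre hz₀U heventually
      exact fun w hw => hconstAll hw
    obtain ⟨z₀, hz₀U, hz₀ζ, hconst⟩ := hz₀
    -- the constant is zero, via decay along the real axis
    obtain ⟨a, b, ha, ha2R, hb', hbζ, hsumab⟩ := hpick (2*R) (‖ζ‖) (by linarith) hζR
    obtain ⟨a', b'', ha', ha'ζ, hb'', hb''2R, hsumab'⟩ := hpick (‖ζ‖) (2*R) hζR (by linarith)
    set Ka := ∑' p : ℕ+ × ℕ+, ‖gterm α ((a:ℝ):ℂ) ((b:ℝ):ℂ) p‖ with hKa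
    set Kb := ∑' p : ℕ+ × ℕ+, ‖gterm α ((a':ℝ):ℂ) ((b'':ℝ):ℂ) p‖ with hKb
    have hKa0 : 0 ≤ Ka := tsum_nonneg (fun p => norm_nonneg _)
    have hKb0 : 0 ≤ Kb := tsum_nonneg (fun p => norm_nonneg _)
    set C := a * Ka + b'' * Kb with hC
    have hC0 : 0 ≤ C := by
      have h1 : 0 < a := hR0.trans ha
      have h2 : 0 < b'' := hR0.trans hb''
      positivity
    have hbound : ∀ t : ℝ, 2*R ≤ t → ‖d ((t:ℝ):ℂ)‖ ≤ C / t := by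
      intro t ht
      have htpos : 0 < t := lt_of_lt_of_le (by linarith) ht
      have htabs : ‖((t:ℝ):ℂ)‖ = t := by
        rw [Complex.norm_real, Real.norm_eq_abs, abs_of_pos htpos]
      have htU : R < ‖((t:ℝ):ℂ)‖ := by rw [htabs]; linarith
      -- bound on S t ζ
      have h1 : ‖S ((t:ℝ):ℂ) ζ‖ ≤ (a/t) * Ka := by
        have hn : ‖S ((t:ℝ):ℂ) ζ‖ ≤ ∑' p : ℕ+ × ℕ+, ‖gterm α ((t:ℝ):ℂ) ζ p‖ := by
          apply norm_tsum_le_tsum_norm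
          simpa using hSummAbs ((t:ℝ):ℂ) ζ htU hζR
        have hterm : ∀ p : ℕ+ × ℕ+, ‖gterm α ((t:ℝ):ℂ) ζ p‖
            ≤ (a/t) * ‖gterm α ((a:ℝ):ℂ) ((b:ℝ):ℂ) p‖ := by
          intro p
          apply gr_gterm_decay_left α (hR0.trans ha) (hR0.trans hb')
            (ha2R.trans ht) hbζ p
        have h2 := Summable.tsum_le_tsum hterm (hSummAbs ((t:ℝ):ℂ) ζ htU hζR) (hsumab.mul_left (a/t))
        rw [tsum_mul_left] at h2
        calc ‖S ((t:ℝ):ℂ) ζ‖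
            ≤ ∑' p : ℕ+ × ℕ+, ‖gterm α ((t:ℝ):ℂ) ζ p‖ := by
              simpa using hn
          _ ≤ (a/t) * Ka := by rw [hKa]; exact h2
      have h2 : ‖S ζ ((t:ℝ):ℂ)‖ ≤ (b''/t) * Kb := by
        have hn : ‖S ζ ((t:ℝ):ℂ)‖ ≤ ∑' p : ℕ+ × ℕ+, ‖gterm α ζ ((t:ℝ):ℂ) p‖ := by
          apply norm_tsum_le_tsum_norm
          simpa using hSummAbs ζ ((t:ℝ):ℂ) hζR htU
        have hterm : ∀ p : ℕ+ × ℕ+, ‖gterm α ζ ((t:ℝ):ℂ) p‖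
            ≤ (b''/t) * ‖gterm α ((a':ℝ):ℂ) ((b'':ℝ):ℂ) p‖ := by
          intro p
          apply gr_gterm_decay_right α (hR0.trans ha') (hR0.trans hb'')
            ha'ζ (hb''2R.trans ht) p
        have h3 := Summable.tsum_le_tsum hterm (hSummAbs ζ ((t:ℝ):ℂ) hζR htU) (hsumab'.mul_left (b''/t))
        rw [tsum_mul_left] at h3
        calc ‖S ζ ((t:ℝ):ℂ)‖
            ≤ ∑' p : ℕ+ × ℕ+, ‖gterm α ζ ((t:ℝ):ℂ) p‖ := by
              simpa using hn
          _ ≤ (b''/t) * Kb := by rw [hKb]; exact h3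
      have htri : ‖d ((t:ℝ):ℂ)‖
          ≤ ‖S ((t:ℝ):ℂ) ζ‖ + ‖S ζ ((t:ℝ):ℂ)‖ := by
        rw [hd]
        simpa using
          norm_sub_le (S ((t:ℝ):ℂ) ζ) (S ζ ((t:ℝ):ℂ))
      calc ‖d ((t:ℝ):ℂ)‖
          ≤ (a/t) * Ka + (b''/t) * Kb := by linarith
        _ = C / t := by rw [hC]; field_simp
    have hdz₀ : d z₀ = 0 := by
      by_contra hne0
      have hA : 0 < ‖d z₀‖ := norm_pos_iff.mpr hne0
      set A := ‖d z₀‖ with hAdef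
      set t := 2*R + (C+1)/A with htdef
      have ht2R : 2*R ≤ t := by
        rw [htdef]
        have : 0 < (C+1)/A := div_pos (by linarith) hA
        linarith
      have htpos : 0 < t := lt_of_lt_of_le (by linarith) ht2R
      have htabs : ‖((t:ℝ):ℂ)‖ = t := by
        rw [Complex.norm_real, Real.norm_eq_abs, abs_of_pos htpos]
      have htU : R < ‖((t:ℝ):ℂ)‖ := by rw [htabs]; linarith
      have hdt : d ((t:ℝ):ℂ) = d z₀ := hconst ((t:ℝ):ℂ) htU
      have hb1 := hbound t ht2R
      rw [hdt] at hb1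
      -- contradiction: A ≤ C/t but C < A*t
      have hAt : A * t = A*(2*R) + (C+1) := by
        rw [htdef, mul_add, mul_div_cancel₀ _ (ne_of_gt hA)]
      have hCAt : C < A * t := by
        rw [hAt]
        nlinarith
      have : A ≤ C / t := hb1
      rw [le_div_iff₀ htpos] at this
      linarith
    have hdz : d z = 0 := by rw [hconst z hzR, hdz₀]
    exact sub_eq_zero.mp hdz
  -- the symmetrized sum
  set St : ℂ → ℂ → ℂ := fun z ζ => ∑' p : ℕ+ × ℕ+, gterm (gbar α) z ζ p with hStdef
  have hStsymm : ∀ z ζ : ℂ, St z ζ = St ζ z := by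
    intro z ζ
    simp only [hStdef]
    calc ∑' p : ℕ+ × ℕ+, gterm (gbar α) z ζ p
        = ∑' p : ℕ+ × ℕ+, gterm (gbar α) ζ z ((Equiv.prodComm ℕ+ ℕ+) p) := by
          apply tsum_congr
          intro p
          simp only [gterm, gbar, Equiv.prodComm_apply, Prod.fst_swap, Prod.snd_swap]
          ring
      _ = ∑' p : ℕ+ × ℕ+, gterm (gbar α) ζ z p := Equiv.tsum_eq _ _
  -- St agrees with S on the region |z|, |ζ| > R
  have hStS : ∀ z ζ : ℂ, R < ‖z‖ → R < ‖ζ‖ → St z ζ = S z ζ := by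
    intro z ζ hz hζ
    have hg1 : Summable (gterm α z ζ) := hSumm z ζ hz hζ
    have hswapfun : (fun p : ℕ+ × ℕ+ => gterm α ζ z ((Equiv.prodComm ℕ+ ℕ+) p))
        = (fun p : ℕ+ × ℕ+ => α p.2 p.1 * z ^ (-((p.1:ℕ):ℤ)) * ζ ^ (-((p.2:ℕ):ℤ))) := by
      funext p
      simp only [gterm, Equiv.prodComm_apply, Prod.fst_swap, Prod.snd_swap]
      ring
    have hg2 : Summable (fun p : ℕ+ × ℕ+ =>
        α p.2 p.1 * z ^ (-((p.1:ℕ):ℤ)) * ζ ^ (-((p.2:ℕ):ℤ))) := by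
      rw [← hswapfun]
      exact ((Equiv.prodComm ℕ+ ℕ+).summable_iff (f := gterm α ζ z)).mpr (hSumm ζ z hζ hz)
    have hswapsum : ∑' p : ℕ+ × ℕ+,
        α p.2 p.1 * z ^ (-((p.1:ℕ):ℤ)) * ζ ^ (-((p.2:ℕ):ℤ)) = S ζ z := by
      rw [← hswapfun, Equiv.tsum_eq]
    have h1 : St z ζ = ∑' p : ℕ+ × ℕ+,
        ((gterm α z ζ p + (α p.2 p.1 * z ^ (-((p.1:ℕ):ℤ)) * ζ ^ (-((p.2:ℕ):ℤ)))) / 2) := by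
      simp only [hStdef]
      apply tsum_congr
      intro p
      simp only [gterm, gbar]
      ring
    rw [h1, tsum_div_const, Summable.tsum_add hg1 hg2, hswapsum]
    have hfold : (∑' p : ℕ+ × ℕ+, gterm α z ζ p) = S z ζ := rfl
    rw [hfold, hsymm z ζ hz hζ]
    ring
  -- holomorphy of St on the exterior disk
  have hdiffSt : ∀ ζ : ℂ, 1 < ‖ζ‖ →
      DifferentiableOn ℂ (fun z => St z ζ) {z : ℂ | 1 < ‖z‖} := by
    intro ζ hζ
    simp only [hStdef]
    apply gr_diffOn_left (gbar α) ζ 1 one_pos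
    intro s hs
    set t := (1 + ‖ζ‖)/2 with htdef
    have ht1 : 1 < t := by rw [htdef]; linarith
    have htζ : t ≤ ‖ζ‖ := by rw [htdef]; linarith
    have hsinv : s⁻¹ < 1 := by
      rw [inv_lt_one_iff₀]; right; exact hs
    have htinv : t⁻¹ < 1 := by
      rw [inv_lt_one_iff₀]; right; exact ht1
    refine ⟨fun p : ℕ+ × ℕ+ => 2 * ((s⁻¹) ^ ((p.1:ℕ)) * (t⁻¹) ^ ((p.2:ℕ))),
      gr_summable_geom (by positivity) hsinv (by positivity) htinv 2, ?_⟩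
    intro p w hw
    exact gr_gterm_le_geom hbar (by linarith) (by linarith) hw htζ p
  -- the extension
  set ζ₀ : ℂ := ((2*R : ℝ) : ℂ) with hζ₀def
  have hζ₀abs : ‖ζ₀‖ = 2*R := by
    rw [hζ₀def, Complex.norm_real, Real.norm_eq_abs, abs_of_pos (by linarith)]
  have hζ₀U : R < ‖ζ₀‖ := by rw [hζ₀abs]; linarith
  have hζ₀E : 1 < ‖ζ₀‖ := by rw [hζ₀abs]; linarith
  set F : ℂ → ℂ := fun z => f ζ₀ + (z - ζ₀) * Complex.exp (-(St z ζ₀)) with hFdef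
  have hFdiff : DifferentiableOn ℂ F extDisk := by
    simp only [hFdef]
    apply DifferentiableOn.const_add
    apply DifferentiableOn.mul
    · exact (differentiableOn_id).sub_const ζ₀
    · exact ((hdiffSt ζ₀ hζ₀E).neg).cexp
  have hFf : ∀ z : ℂ, R < ‖z‖ → F z = f z := by
    intro z hz
    by_cases hzζ₀ : z = ζ₀
    · rw [hFdef, hzζ₀]
      simp
    · have h1 := hExp z ζ₀ hz hζ₀U hzζ₀
      rw [hFdef]
      simp only
      rw [hStS z ζ₀ hz hζ₀U, ← h1]
      ring
  -- key identity on all of extDisk × extDisk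
  have hkey : ∀ ζ : ℂ, R < ‖ζ‖ → ∀ z : ℂ, z ∈ extDisk →
      F z - F ζ - (z - ζ) * Complex.exp (-(St z ζ)) = 0 := by
    intro ζ hζR
    have hζE : 1 < ‖ζ‖ := lt_trans hR hζR
    set g : ℂ → ℂ := fun z => F z - F ζ - (z - ζ) * Complex.exp (-(St z ζ)) with hgdef
    have hgdiff : DifferentiableOn ℂ g extDisk := by
      simp only [hgdef]
      apply DifferentiableOn.sub
      · exact hFdiff.sub_const (F ζ)
      · exact ((differentiableOn_id).sub_const ζ).mul (((hdiffSt ζ hζE).neg).cexp)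
    have hgzero : ∀ z : ℂ, R < ‖z‖ → g z = 0 := by
      intro z hz
      simp only [hgdef]
      rw [hFf z hz, hFf ζ hζR, hStS z ζ hz hζR]
      by_cases hzζ : z = ζ
      · rw [hzζ]; ring
      · rw [← hExp z ζ hz hζR hzζ]; ring
    have hζ₀E' : ζ₀ ∈ extDisk := hζ₀E
    have hmem : {w : ℂ | R < ‖w‖} ∈ nhds ζ₀ := hUopen.mem_nhds hζ₀U
    have heventually : g =ᶠ[nhds ζ₀] 0 :=
      Filter.eventuallyEq_of_mem hmem (fun x hx => hgzero x hx)
    have hanalytic := hgdiff.analyticOnNhd hEopen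
    have := hanalytic.eqOn_zero_of_preconnected_of_eventuallyEq_zero hEpre hζ₀E' heventually
    intro z hz
    exact this hz
  have hkey2 : ∀ z : ℂ, z ∈ extDisk → ∀ ζ : ℂ, ζ ∈ extDisk →
      F z - F ζ - (z - ζ) * Complex.exp (-(St z ζ)) = 0 := by
    intro z hz
    set g : ℂ → ℂ := fun ζ => F z - F ζ - (z - ζ) * Complex.exp (-(St z ζ)) with hgdef
    have hgfun : g = fun ζ => F z - F ζ - (z - ζ) * Complex.exp (-(St ζ z)) := by
      funext ζ
      rw [hgdef]
      simp only
      rw [hStsymm z ζ]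
    have hgdiff : DifferentiableOn ℂ g extDisk := by
      rw [hgfun]
      apply DifferentiableOn.sub
      · exact (hFdiff.neg).const_add (F z)
      · exact ((differentiableOn_const z).sub differentiableOn_id).mul
          (((hdiffSt z hz).neg).cexp)
    have hgzero : ∀ ζ : ℂ, R < ‖ζ‖ → g ζ = 0 := by
      intro ζ hζ
      exact hkey ζ hζ z hz
    have hζ₀E' : ζ₀ ∈ extDisk := hζ₀E
    have hmem : {w : ℂ | R < ‖w‖} ∈ nhds ζ₀ := hUopen.mem_nhds hζ₀U
    have heventually : g =ᶠ[nhds ζ₀] 0 :=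
      Filter.eventuallyEq_of_mem hmem (fun x hx => hgzero x hx)
    have hanalytic := hgdiff.analyticOnNhd hEopen
    have := hanalytic.eqOn_zero_of_preconnected_of_eventuallyEq_zero hEpre hζ₀E' heventually
    intro ζ hζ
    exact this hζ
  -- injectivity
  have hInj : Set.InjOn F extDisk := by
    intro z hz ζ hζ hFzζ
    have h0 := hkey2 z hz ζ hζ
    rw [hFzζ] at h0
    have : (z - ζ) * Complex.exp (-(St z ζ)) = 0 := by
      have h1 : F ζ - F ζ - (z - ζ) * Complex.exp (-(St z ζ)) = 0 := h0
      linear_combination -h1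
    rcases mul_eq_zero.mp this with h | h
    · exact sub_eq_zero.mp h
    · exact absurd h (Complex.exp_ne_zero _)
  exact ⟨F, hFdiff, hInj, hFf⟩
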